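/- Let X ∈ ℝ^{n×m}, let P ∈ ℝ^{n×n} be symmetric with P² = P and P X = X, and let M > 0 be a real number with ‖X‖_σ ≤ M. Then the (n+m)×(n+m) block matrix [[M·P, X], [Xᵀ, M·I_m]] is positive semidefinite. -/

import Mathlib

open Matrix

/-- The spectral norm of a real matrix: its ℓ²→ℓ² operator norm
(i.e. the largest singular value of `X`). -/
noncomputable def matrixSpectralNorm {n m : ℕ} (X : Matrix (Fin n) (Fin m) ℝ) : ℝ :=
  ‖LinearMap.toContinuousLinearMap (Matrix.toEuclideanLin X)‖

/-- If `P` is a symmetric idempotent with `P X = X` and `‖X‖_σ ≤ M` with `M > 0`,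
then the block matrix `[[M P, X], [Xᵀ, M I]]` is positive semidefinite. -/
theorem blockMatrix_posSemidef {n m : ℕ}
    (X : Matrix (Fin n) (Fin m) ℝ) (P : Matrix (Fin n) (Fin n) ℝ) (M : ℝ)
    (hM : 0 < M) (hPsym : Pᵀ = P) (hPidem : P * P = P) (hPX : P * X = X)
    (hXM : matrixSpectralNorm X ≤ M) :
    (Matrix.fromBlocks (M • P) X Xᵀ (M • (1 : Matrix (Fin m) (Fin m) ℝ))).PosSemidef := by
  rw [Matrix.posSemidef_iff_dotProduct_mulVec]
  constructor
  · refine Matrix.IsHermitian.fromBlocks ?_ rfl ?_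
    · simpa [Matrix.IsHermitian, Matrix.transpose_smul] using congrArg (M • ·) hPsym
    · simp [Matrix.IsHermitian]
  · intro x
    set u : Fin n → ℝ := x ∘ Sum.inl with hu
    set v : Fin m → ℝ := x ∘ Sum.inr with hv
    have hx : x = Sum.elim u v := by ext i; cases i <;> rfl
    -- Euclidean versions
    set eu : EuclideanSpace ℝ (Fin n) := (WithLp.equiv 2 (Fin n → ℝ)).symm (P *ᵥ u) with heu
    set ev : EuclideanSpace ℝ (Fin m) := (WithLp.equiv 2 (Fin m → ℝ)).symm v with hev
    set eXv : EuclideanSpace ℝ (Fin n) := (WithLp.equiv 2 (Fin n → ℝ)).symm (X *ᵥ v) with heXv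
    -- norm bound on X *ᵥ v
    have hXv : ‖eXv‖ ≤ M * ‖ev‖ := by
      have h1 : eXv = LinearMap.toContinuousLinearMap (Matrix.toEuclideanLin X) ev := rfl
      rw [h1]
      calc ‖LinearMap.toContinuousLinearMap (Matrix.toEuclideanLin X) ev‖
          ≤ matrixSpectralNorm X * ‖ev‖ :=
            (LinearMap.toContinuousLinearMap (Matrix.toEuclideanLin X)).le_opNorm ev
        _ ≤ M * ‖ev‖ := by
            exact mul_le_mul_of_nonneg_right hXM (norm_nonneg _)
    -- u ⬝ P u = ‖Pu‖²
    have hPu : u ⬝ᵥ (P *ᵥ u) = ‖eu‖ ^ 2 := by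
      have h2 : (P *ᵥ u) ⬝ᵥ (P *ᵥ u) = u ⬝ᵥ (P *ᵥ u) := by
        rw [Matrix.dotProduct_mulVec, Matrix.vecMul_mulVec, hPsym, hPidem,
          ← Matrix.dotProduct_mulVec]
      rw [← h2, ← real_inner_self_eq_norm_sq]
      rfl
    -- cross term
    have hcross : u ⬝ᵥ (X *ᵥ v) = inner ℝ eu eXv := by
      have h3 : u ⬝ᵥ (X *ᵥ v) = (P *ᵥ u) ⬝ᵥ (X *ᵥ v) := by
        calc u ⬝ᵥ X *ᵥ v = u ⬝ᵥ P *ᵥ (X *ᵥ v) := by rw [Matrix.mulVec_mulVec, hPX]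
          _ = (P *ᵥ u) ⬝ᵥ (X *ᵥ v) := by
              rw [Matrix.dotProduct_mulVec, ← Matrix.mulVec_transpose, hPsym]
      rw [h3, EuclideanSpace.inner_eq_star_dotProduct, dotProduct_comm]
      rfl
    have hcross2 : v ⬝ᵥ Xᵀ *ᵥ u = inner ℝ eu eXv := by
      rw [Matrix.dotProduct_mulVec, Matrix.vecMul_transpose, dotProduct_comm, hcross]
    have hinner : -(M * ‖eu‖ * ‖ev‖) ≤ inner ℝ eu eXv := by
      have := abs_real_inner_le_norm eu eXv
      have h4 : ‖eu‖ * ‖eXv‖ ≤ ‖eu‖ * (M * ‖ev‖) :=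
        mul_le_mul_of_nonneg_left hXv (norm_nonneg _)
      nlinarith [neg_abs_le (inner ℝ eu eXv : ℝ)]
    -- expand quadratic form
    rw [hx]
    simp only [Matrix.fromBlocks_mulVec, Function.star_sumElim, sumElim_dotProduct_sumElim,
      dotProduct_add, add_dotProduct, Matrix.smul_mulVec,
      Matrix.one_mulVec, dotProduct_smul, star_trivial, Sum.elim_comp_inl_inr, Sum.elim_comp_inl, Sum.elim_comp_inr, smul_eq_mul]
    have hvv : v ⬝ᵥ v = ‖ev‖ ^ 2 := by
      rw [← real_inner_self_eq_norm_sq]; rfl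
    rw [hPu, hcross, hcross2, hvv]
    nlinarith [sq_nonneg (‖eu‖ - ‖ev‖), norm_nonneg eu, norm_nonneg ev]
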